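/- Let C ⊆ (ZMod 2)^n be a linear code of dimension k with normalized indicator s. The Schmidt measure P(s), defined as log₂ of the minimal number of nonzero entries among all states U s with U a tensor product of n unitary 2×2 matrices, satisfies P(s) ≤ min(k, n−k). -/

import Mathlib

open scoped Classical

noncomputable section SchmidtAux

lemma zmod2_cases (a : ZMod 2) : a = 0 ∨ a = 1 := by revert a; decide

lemma zmod2_sum (f : ZMod 2 → ℂ) : ∑ x : ZMod 2, f x = f 0 + f 1 := by
  rw [show (Finset.univ : Finset (ZMod 2)) = {0, 1} from by decide]
  rw [Finset.sum_pair (by decide)]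

/-- ±1 character on `ZMod 2`. -/
def chi : ZMod 2 → ℂ := fun a => if a = 0 then 1 else -1

lemma chi_zero : chi 0 = 1 := rfl

lemma chi_one : chi 1 = -1 := rfl

lemma chi_add (a b : ZMod 2) : chi (a + b) = chi a * chi b := by
  rcases zmod2_cases a with ha | ha <;> rcases zmod2_cases b with hb | hb <;>
    subst ha <;> subst hb <;>
    simp [chi, show (1 + 1 : ZMod 2) = 0 from by decide]

lemma chi_add_one (a : ZMod 2) : chi (a + 1) = - chi a := by
  rw [chi_add, chi_one]; ring

lemma chi_sum {ι : Type*} (t : Finset ι) (f : ι → ZMod 2) :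
    chi (∑ i ∈ t, f i) = ∏ i ∈ t, chi (f i) := by
  classical
  induction t using Finset.induction with
  | empty => simp [chi_zero]
  | @insert _ _ h ih => simp [Finset.sum_insert h, Finset.prod_insert h, chi_add, ih]

/-- Hadamard matrix. -/
def Hmat : Matrix (ZMod 2) (ZMod 2) ℂ :=
  fun a b => chi (a * b) * (((Real.sqrt 2)⁻¹ : ℝ) : ℂ)

lemma Hmat_unitary : Hmat ∈ Matrix.unitaryGroup (ZMod 2) ℂ := by
  rw [Matrix.mem_unitaryGroup_iff]
  ext a c
  rw [Matrix.mul_apply, zmod2_sum]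
  have h2 : ((Real.sqrt 2 : ℝ) : ℂ)⁻¹ * ((Real.sqrt 2 : ℝ) : ℂ)⁻¹ = (2 : ℂ)⁻¹ := by
    rw [← mul_inv]
    congr 1
    norm_cast
    rw [Real.mul_self_sqrt (by norm_num)]
  rcases zmod2_cases a with ha | ha <;> rcases zmod2_cases c with hc | hc <;>
    subst ha <;> subst hc <;>
    simp [Hmat, Matrix.star_apply, Matrix.one_apply, chi, Complex.conj_ofReal,
      show (1 : ZMod 2) ≠ 0 from by decide] <;>
    ring_nf <;> rw [sq] <;> rw [h2] <;> norm_num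


variable {n : ℕ}

/-- The dot-product bilinear form on `(ZMod 2)^n`. -/
def Bdot (n : ℕ) : LinearMap.BilinForm (ZMod 2) (Fin n → ZMod 2) :=
  LinearMap.mk₂ (ZMod 2) (fun x y => ∑ i, x i * y i)
    (fun x x' y => by simp [add_mul, Finset.sum_add_distrib])
    (fun a x y => by simp [Finset.mul_sum, mul_assoc])
    (fun x y y' => by simp [mul_add, Finset.sum_add_distrib])
    (fun a x y => by simp [Finset.mul_sum]; exact Finset.sum_congr rfl fun i _ => by ring)

lemma Bdot_apply (x y : Fin n → ZMod 2) : Bdot n x y = ∑ i, x i * y i := rfl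

lemma Bdot_symm (x y : Fin n → ZMod 2) : Bdot n x y = Bdot n y x := by
  simp [Bdot_apply, mul_comm]

lemma Bdot_refl : (Bdot n).IsRefl := fun x y h => by rwa [Bdot_symm] at h

lemma Bdot_nondeg : (Bdot n).Nondegenerate := by
  refine (LinearMap.IsRefl.nondegenerate_iff_separatingLeft Bdot_refl).mpr ?_
  intro x hx
  funext i
  have := hx (Pi.single i 1)
  simpa [Bdot_apply, Pi.single_apply, mul_ite, Finset.sum_ite_eq'] using this

lemma prod_one_apply {n : ℕ} (x y : Fin n → ZMod 2) :
    (∏ i, (1 : Matrix (ZMod 2) (ZMod 2) ℂ) (x i) (y i)) = if y = x then 1 else 0 := by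
  by_cases h : y = x
  · subst h; simp [Matrix.one_apply]
  · obtain ⟨i, hi⟩ := Function.ne_iff.mp h
    rw [if_neg h]
    exact Finset.prod_eq_zero (f := fun i => (1 : Matrix (ZMod 2) (ZMod 2) ℂ) (x i) (y i))
      (Finset.mem_univ i) (Matrix.one_apply_ne (Ne.symm hi))

lemma sqrt_pow_ne_zero (k : ℕ) : (((Real.sqrt (2 ^ k))⁻¹ : ℝ) : ℂ) ≠ 0 := by
  have : (0 : ℝ) < Real.sqrt (2 ^ k) := Real.sqrt_pos.mpr (by positivity)
  simp only [ne_eq, Complex.ofReal_eq_zero, inv_eq_zero]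
  exact ne_of_gt this

lemma char_sum_ne_zero_iff {n : ℕ} (C : Submodule (ZMod 2) (Fin n → ZMod 2))
    (x : Fin n → ZMod 2) :
    (∑ y ∈ Finset.univ.filter (fun y => y ∈ C), chi (Bdot n y x)) ≠ 0 ↔
      x ∈ (Bdot n).orthogonal C := by
  rw [LinearMap.BilinForm.mem_orthogonal_iff]
  constructor
  · intro hT
    by_contra hx
    push_neg at hx
    obtain ⟨y0, hy0, hBy0⟩ := hx
    have hB1 : Bdot n y0 x = 1 := by
      rcases zmod2_cases (Bdot n y0 x) with h | h
      · exact absurd h hBy0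
      · exact h
    apply hT
    set F := Finset.univ.filter (fun y => y ∈ C) with hF
    set T := ∑ y ∈ F, chi (Bdot n y x) with hTdef
    have h1 : ∑ y ∈ F, chi (Bdot n (y + y0) x) = T := by
      refine Finset.sum_equiv (Equiv.addRight y0) ?_ ?_
      · intro y
        simp only [hF, Finset.mem_filter, Finset.mem_univ, true_and,
          Equiv.coe_addRight]
        exact (C.add_mem_iff_left hy0).symm
      · intro y _; rfl
    have h2 : ∀ y, chi (Bdot n (y + y0) x) = - chi (Bdot n y x) := by
      intro y
      have : Bdot n (y + y0) x = Bdot n y x + Bdot n y0 x := by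
        simp [Bdot_apply, add_mul, Finset.sum_add_distrib]
      rw [this, hB1, chi_add_one]
    have h3 : T = -T :=
      calc T = ∑ y ∈ F, chi (Bdot n (y + y0) x) := h1.symm
        _ = ∑ y ∈ F, - chi (Bdot n y x) := Finset.sum_congr rfl (fun y _ => h2 y)
        _ = -T := by rw [hTdef]; exact Finset.sum_neg_distrib (f := fun y => chi (Bdot n y x))
    have : (2 : ℂ) * T = 0 := by linear_combination h3
    simpa using this
  · intro hx
    have : ∀ y ∈ Finset.univ.filter (fun y => y ∈ C), chi (Bdot n y x) = 1 := by
      intro y hy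
      rw [hx y (Finset.mem_filter.mp hy).2, chi_zero]
    rw [Finset.sum_congr rfl this]
    simp only [Finset.sum_const, nsmul_eq_mul, mul_one]
    have hc : 0 < (Finset.univ.filter (fun y => y ∈ C)).card := by
      refine Finset.card_pos.mpr ⟨0, ?_⟩
      simp [C.zero_mem]
    exact_mod_cast hc.ne'

end SchmidtAux

/-- The Schmidt measure (log₂ of the minimal number of nonzero entries over all
local-unitary images) of the normalized indicator state of an `[n,k]` binary
linear code is at most `min(k, n−k)`. -/
theorem stmt_10 (n k : ℕ) (hk : k ≤ n)
    (C : Submodule (ZMod 2) (Fin n → ZMod 2))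
    (hC : Module.finrank (ZMod 2) C = k)
    (s : (Fin n → ZMod 2) → ℂ)
    (hs : ∀ x, s x = if x ∈ C then ((Real.sqrt (2 ^ k))⁻¹ : ℝ) else 0) :
    Real.logb 2
      (sInf { m : ℕ |
        ∃ U : Fin n → Matrix (ZMod 2) (ZMod 2) ℂ,
          (∀ i, U i ∈ Matrix.unitaryGroup (ZMod 2) ℂ) ∧
          m = (Finset.univ.filter (fun x : Fin n → ZMod 2 =>
                (∑ y : Fin n → ZMod 2, (∏ i, U i (x i) (y i)) * s y) ≠ 0)).card } : ℕ)
      ≤ min k (n - k) := by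
  set S := { m : ℕ |
        ∃ U : Fin n → Matrix (ZMod 2) (ZMod 2) ℂ,
          (∀ i, U i ∈ Matrix.unitaryGroup (ZMod 2) ℂ) ∧
          m = (Finset.univ.filter (fun x : Fin n → ZMod 2 =>
                (∑ y : Fin n → ZMod 2, (∏ i, U i (x i) (y i)) * s y) ≠ 0)).card } with hS
  have hcne : (((Real.sqrt (2 ^ k))⁻¹ : ℝ) : ℂ) ≠ 0 := sqrt_pow_ne_zero k
  -- identity: 2^k ∈ S
  have hid : (2 ^ k) ∈ S := by
    refine ⟨fun _ => 1, fun i => one_mem _, ?_⟩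
    have hsum : ∀ x : Fin n → ZMod 2,
        (∑ y : Fin n → ZMod 2, (∏ i, (1 : Matrix (ZMod 2) (ZMod 2) ℂ) (x i) (y i)) * s y)
          = s x := by
      intro x
      simp only [prod_one_apply, ite_mul, one_mul, zero_mul]
      rw [Finset.sum_ite_eq' Finset.univ x s]
      simp
    have hfilter : (Finset.univ.filter (fun x : Fin n → ZMod 2 =>
          (∑ y : Fin n → ZMod 2, (∏ i, (1 : Matrix (ZMod 2) (ZMod 2) ℂ) (x i) (y i)) * s y) ≠ 0))
        = Finset.univ.filter (fun x => x ∈ C) := by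
      apply Finset.filter_congr
      intro x _
      rw [hsum, hs x]
      by_cases h : x ∈ C <;> simp [h, hcne]
    rw [hfilter, ← Fintype.card_subtype]
    rw [show Fintype.card {x // x ∈ C} = Fintype.card C from rfl,
      Module.card_eq_pow_finrank (K := ZMod 2), hC, ZMod.card]
  -- Hadamard: 2^(n-k) ∈ S
  have hhad : (2 ^ (n - k)) ∈ S := by
    refine ⟨fun _ => Hmat, fun i => Hmat_unitary, ?_⟩
    set r : ℂ := (((Real.sqrt 2)⁻¹ : ℝ) : ℂ) with hr
    have hrne : r ≠ 0 := by
      have : (0 : ℝ) < Real.sqrt 2 := Real.sqrt_pos.mpr (by norm_num)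
      simp [hr, ne_of_gt this]
    have hsum : ∀ x : Fin n → ZMod 2,
        (∑ y : Fin n → ZMod 2, (∏ i, Hmat (x i) (y i)) * s y)
          = (r ^ n * (((Real.sqrt (2 ^ k))⁻¹ : ℝ) : ℂ)) *
              ∑ y ∈ Finset.univ.filter (fun y => y ∈ C), chi (Bdot n y x) := by
      intro x
      rw [Finset.mul_sum, Finset.sum_filter]
      refine Finset.sum_congr rfl fun y _ => ?_
      have hp : (∏ i, Hmat (x i) (y i)) = chi (Bdot n y x) * r ^ n := by
        simp only [Hmat]
        rw [Finset.prod_mul_distrib, Finset.prod_const, Finset.card_univ, Fintype.card_fin,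
          ← chi_sum]
        congr 2
        simp [Bdot_apply, mul_comm]
      rw [hp, hs y]
      by_cases h : y ∈ C <;> simp [h] <;> ring
    have hfilter : (Finset.univ.filter (fun x : Fin n → ZMod 2 =>
          (∑ y : Fin n → ZMod 2, (∏ i, Hmat (x i) (y i)) * s y) ≠ 0))
        = Finset.univ.filter (fun x => x ∈ (Bdot n).orthogonal C) := by
      apply Finset.filter_congr
      intro x _
      have hA : r ^ n * (((Real.sqrt (2 ^ k))⁻¹ : ℝ) : ℂ) ≠ 0 :=
        mul_ne_zero (pow_ne_zero _ hrne) hcne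
      rw [hsum x, mul_ne_zero_iff, ← char_sum_ne_zero_iff C x]
      exact and_iff_right hA
    rw [hfilter, ← Fintype.card_subtype]
    rw [show Fintype.card {x // x ∈ (Bdot n).orthogonal C} =
        Fintype.card ((Bdot n).orthogonal C) from rfl,
      Module.card_eq_pow_finrank (K := ZMod 2), ZMod.card,
      LinearMap.BilinForm.finrank_orthogonal Bdot_nondeg, hC,
      Module.finrank_fin_fun]
  -- conclude
  set m0 := min k (n - k) with hm0
  have hmem : (2 ^ m0) ∈ S := by
    rcases le_total k (n - k) with h | h
    · rwa [hm0, min_eq_left h]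
    · rwa [hm0, min_eq_right h]
  have hinf : sInf S ≤ 2 ^ m0 := Nat.sInf_le hmem
  rcases Nat.eq_zero_or_pos (sInf S) with h0 | h0
  · rw [h0]
    simp only [Nat.cast_zero, Real.logb_zero]
    positivity
  · have hlog : Real.logb 2 ((sInf S : ℕ) : ℝ) ≤ Real.logb 2 ((2 : ℝ) ^ m0) := by
      apply (Real.logb_le_logb (by norm_num) (by exact_mod_cast h0) (by positivity)).mpr
      exact_mod_cast hinf
    have hlog2 : Real.logb 2 ((2 : ℝ) ^ m0) = m0 := by
      rw [Real.logb_pow, Real.logb_self_eq_one (by norm_num), mul_one]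
    calc Real.logb 2 ((sInf S : ℕ) : ℝ) ≤ ((2:ℝ) ^ m0 |> Real.logb 2) := hlog
      _ = (m0 : ℝ) := hlog2
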